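/- Under the translation ⌈·⌉ from λ(→,∧,∨,⊥) to λ→, the β-redex ⟨M,N⟩π₁ of type σ (with ⌈σ⌉ = σ₁→…→σₙ→⊥) satisfies: ⌈⟨M,N⟩π₁⌉ βη-reduces in one or more steps to ⌈M⌉. -/

import Mathlib

/-! Types of the full simply-typed lambda-calculus λ(→,∧,∨,⊥). -/
inductive Ty : Type
  | base : ℕ → Ty
  | bot  : Ty
  | arr  : Ty → Ty → Ty
  | and  : Ty → Ty → Ty
  | or   : Ty → Ty → Ty
  deriving DecidableEq

/-- Church-style terms of λ(→,∧,∨,⊥), de Bruijn indices for variables. -/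
inductive Tm : Type
  | var   : ℕ → Tm
  | lam   : Ty → Tm → Tm
  | app   : Tm → Tm → Tm
  | pair  : Tm → Tm → Tm
  | inl   : Ty → Ty → Tm → Tm            -- (in₁ A)^(σ∨τ)
  | inr   : Ty → Ty → Tm → Tm
  | proj1 : Tm → Ty → Ty → Tm            -- P^(σ∧τ) π₁
  | proj2 : Tm → Ty → Ty → Tm
  | case  : Tm → Ty → Ty → Tm → Tm → Ty → Tm  -- W^(σ∨τ)[x.S,y.T]^δ
  | eps   : Tm → Ty → Tm                 -- A^⊥ ε_σ
  deriving DecidableEq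

namespace Tm

/-- Shift the free variables `≥ c` of a term by `d`. -/
def shift (c d : ℕ) : Tm → Tm
  | var n => if n < c then var n else var (n + d)
  | lam σ t => lam σ (shift (c + 1) d t)
  | app s t => app (shift c d s) (shift c d t)
  | pair s t => pair (shift c d s) (shift c d t)
  | inl σ τ t => inl σ τ (shift c d t)
  | inr σ τ t => inr σ τ (shift c d t)
  | proj1 t σ τ => proj1 (shift c d t) σ τ
  | proj2 t σ τ => proj2 (shift c d t) σ τ
  | case w σ τ s t δ => case (shift c d w) σ τ (shift (c + 1) d s) (shift (c + 1) d t) δ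
  | eps t σ => eps (shift c d t) σ

/-- Capture-avoiding substitution of `s` for variable `n`. -/
def subst : Tm → ℕ → Tm → Tm
  | var m, n, s => if m = n then s else if n < m then var (m - 1) else var m
  | lam σ t, n, s => lam σ (subst t (n + 1) (shift 0 1 s))
  | app a b, n, s => app (subst a n s) (subst b n s)
  | pair a b, n, s => pair (subst a n s) (subst b n s)
  | inl σ τ t, n, s => inl σ τ (subst t n s)
  | inr σ τ t, n, s => inr σ τ (subst t n s)
  | proj1 t σ τ, n, s => proj1 (subst t n s) σ τ
  | proj2 t σ τ, n, s => proj2 (subst t n s) σ τ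
  | case w σ τ a b δ, n, s =>
      case (subst w n s) σ τ (subst a (n + 1) (shift 0 1 s)) (subst b (n + 1) (shift 0 1 s)) δ
  | eps t σ, n, s => eps (subst t n s) σ

end Tm

/-- Typing judgment of λ(→,∧,∨,⊥). -/
inductive HasTy : List Ty → Tm → Ty → Prop
  | var {Γ n τ} : Γ[n]? = some τ → HasTy Γ (.var n) τ
  | lam {Γ σ τ t} : HasTy (σ :: Γ) t τ → HasTy Γ (.lam σ t) (.arr σ τ)
  | app {Γ σ τ s t} : HasTy Γ s (.arr σ τ) → HasTy Γ t σ → HasTy Γ (.app s t) τ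
  | pair {Γ σ τ s t} : HasTy Γ s σ → HasTy Γ t τ → HasTy Γ (.pair s t) (.and σ τ)
  | inl {Γ σ τ t} : HasTy Γ t σ → HasTy Γ (.inl σ τ t) (.or σ τ)
  | inr {Γ σ τ t} : HasTy Γ t τ → HasTy Γ (.inr σ τ t) (.or σ τ)
  | proj1 {Γ σ τ t} : HasTy Γ t (.and σ τ) → HasTy Γ (.proj1 t σ τ) σ
  | proj2 {Γ σ τ t} : HasTy Γ t (.and σ τ) → HasTy Γ (.proj2 t σ τ) τ
  | case {Γ σ τ δ w s t} : HasTy Γ w (.or σ τ) → HasTy (σ :: Γ) s δ → HasTy (τ :: Γ) t δ →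
      HasTy Γ (.case w σ τ s t δ) δ
  | eps {Γ σ t} : HasTy Γ t .bot → HasTy Γ (.eps t σ) σ

/-- Compatible (congruence) closure of a root relation on terms. -/
inductive Compat (R : Tm → Tm → Prop) : Tm → Tm → Prop
  | root {a b} : R a b → Compat R a b
  | lam {σ a b} : Compat R a b → Compat R (.lam σ a) (.lam σ b)
  | appL {a b t} : Compat R a b → Compat R (.app a t) (.app b t)
  | appR {a b t} : Compat R a b → Compat R (.app t a) (.app t b)
  | pairL {a b t} : Compat R a b → Compat R (.pair a t) (.pair b t)
  | pairR {a b t} : Compat R a b → Compat R (.pair t a) (.pair t b)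
  | inl {σ τ a b} : Compat R a b → Compat R (.inl σ τ a) (.inl σ τ b)
  | inr {σ τ a b} : Compat R a b → Compat R (.inr σ τ a) (.inr σ τ b)
  | proj1 {σ τ a b} : Compat R a b → Compat R (.proj1 a σ τ) (.proj1 b σ τ)
  | proj2 {σ τ a b} : Compat R a b → Compat R (.proj2 a σ τ) (.proj2 b σ τ)
  | caseW {σ τ δ a b s t} : Compat R a b → Compat R (.case a σ τ s t δ) (.case b σ τ s t δ)
  | caseS {σ τ δ w a b t} : Compat R a b → Compat R (.case w σ τ a t δ) (.case w σ τ b t δ)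
  | caseT {σ τ δ w s a b} : Compat R a b → Compat R (.case w σ τ s a δ) (.case w σ τ s b δ)
  | eps {σ a b} : Compat R a b → Compat R (.eps a σ) (.eps b σ)

/-- Root β-reductions of λ(→,∧,∨,⊥). -/
inductive BetaRoot : Tm → Tm → Prop
  | beta {σ m a} : BetaRoot (.app (.lam σ m) a) (m.subst 0 a)
  | pi1 {m n σ τ} : BetaRoot (.proj1 (.pair m n) σ τ) m
  | pi2 {m n σ τ} : BetaRoot (.proj2 (.pair m n) σ τ) n
  | inl {σ τ δ a s t} : BetaRoot (.case (.inl σ τ a) σ τ s t δ) (s.subst 0 a)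
  | inr {σ τ δ b s t} : BetaRoot (.case (.inr σ τ b) σ τ s t δ) (t.subst 0 b)

/-- Root commutative (permutative) reductions of λ(→,∧,∨,⊥). -/
inductive CommRoot : Tm → Tm → Prop
  | epsApp {a σ τ n} : CommRoot (.app (.eps a (.arr σ τ)) n) (.eps a τ)
  | epsPi1 {a σ τ} : CommRoot (.proj1 (.eps a (.and σ τ)) σ τ) (.eps a σ)
  | epsPi2 {a σ τ} : CommRoot (.proj2 (.eps a (.and σ τ)) σ τ) (.eps a τ)
  | epsCase {a σ τ δ s t} : CommRoot (.case (.eps a (.or σ τ)) σ τ s t δ) (.eps a δ)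
  | epsEps {a σ} : CommRoot (.eps (.eps a .bot) σ) (.eps a σ)
  | caseApp {w σ τ α β s t n} :
      CommRoot (.app (.case w σ τ s t (.arr α β)) n)
        (.case w σ τ (.app s (n.shift 0 1)) (.app t (n.shift 0 1)) β)
  | casePi1 {w σ τ α β s t} :
      CommRoot (.proj1 (.case w σ τ s t (.and α β)) α β)
        (.case w σ τ (.proj1 s α β) (.proj1 t α β) α)
  | casePi2 {w σ τ α β s t} :
      CommRoot (.proj2 (.case w σ τ s t (.and α β)) α β)
        (.case w σ τ (.proj2 s α β) (.proj2 t α β) β)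
  | caseCase {w σ τ α β δ s t a b} :
      CommRoot (.case (.case w σ τ s t (.or α β)) α β a b δ)
        (.case w σ τ (.case s α β (a.shift 1 1) (b.shift 1 1) δ)
          (.case t α β (a.shift 1 1) (b.shift 1 1) δ) δ)
  | caseEps {w σ τ s t α} :
      CommRoot (.eps (.case w σ τ s t .bot) α)
        (.case w σ τ (.eps s α) (.eps t α) α)

/-- One step of β-reduction anywhere in a term. -/
def Beta : Tm → Tm → Prop := Compat BetaRoot

/-- One step of commutative (permutative) reduction anywhere in a term. -/
def Comm : Tm → Tm → Prop := Compat CommRoot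

/-! ## The target calculus λ→ -/

/-- Types of λ→: a single base type ⊥ and function types. -/
inductive Ty1 : Type
  | bot : Ty1
  | arr : Ty1 → Ty1 → Ty1
  deriving DecidableEq

/-- (Curry-style) terms of λ→, de Bruijn indices. -/
inductive Tm1 : Type
  | var : ℕ → Tm1
  | lam : Tm1 → Tm1
  | app : Tm1 → Tm1 → Tm1
  deriving DecidableEq

namespace Tm1

def shift (c d : ℕ) : Tm1 → Tm1
  | var n => if n < c then var n else var (n + d)
  | lam t => lam (shift (c + 1) d t)
  | app s t => app (shift c d s) (shift c d t)

def subst : Tm1 → ℕ → Tm1 → Tm1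
  | var m, n, s => if m = n then s else if n < m then var (m - 1) else var m
  | lam t, n, s => lam (subst t (n + 1) (shift 0 1 s))
  | app a b, n, s => app (subst a n s) (subst b n s)

end Tm1

/-- Typing in λ→. -/
inductive HasTy1 : List Ty1 → Tm1 → Ty1 → Prop
  | var {Γ n τ} : Γ[n]? = some τ → HasTy1 Γ (.var n) τ
  | lam {Γ σ τ t} : HasTy1 (σ :: Γ) t τ → HasTy1 Γ (.lam t) (.arr σ τ)
  | app {Γ σ τ s t} : HasTy1 Γ s (.arr σ τ) → HasTy1 Γ t σ → HasTy1 Γ (.app s t) τ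

/-- One step of βη-reduction in λ→. -/
inductive Step1 : Tm1 → Tm1 → Prop
  | beta {t s} : Step1 (.app (.lam t) s) (t.subst 0 s)
  | eta {t} : Step1 (.lam (.app (t.shift 0 1) (.var 0))) t
  | lam {a b} : Step1 a b → Step1 (.lam a) (.lam b)
  | appL {a b t} : Step1 a b → Step1 (.app a t) (.app b t)
  | appR {a b t} : Step1 a b → Step1 (.app t a) (.app t b)

/-- One step of η-reduction in λ→. -/
inductive EtaStep : Tm1 → Tm1 → Prop
  | eta {t} : EtaStep (.lam (.app (t.shift 0 1) (.var 0))) t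
  | lam {a b} : EtaStep a b → EtaStep (.lam a) (.lam b)
  | appL {a b t} : EtaStep a b → EtaStep (.app a t) (.app b t)
  | appR {a b t} : EtaStep a b → EtaStep (.app t a) (.app t b)

/-! ## The translation -/

/-- Translation of types: all type constants (including ⊥) go to ⊥. -/
def trTy : Ty → Ty1
  | .base _ => .bot
  | .bot => .bot
  | .arr σ τ => .arr (trTy σ) (trTy τ)
  | .and σ τ => .arr (.arr (trTy σ) (.arr (trTy τ) .bot)) .bot
  | .or σ τ => .arr (.arr (trTy σ) .bot) (.arr (.arr (trTy τ) .bot) .bot)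

/-- The argument list of a λ→ type: `args (σ₁→…→σₙ→⊥) = [σ₁,…,σₙ]`. -/
def args : Ty1 → List Ty1
  | .bot => []
  | .arr a b => a :: args b

/-- `absN n t = λx₁…xₙ. t`. -/
def absN : ℕ → Tm1 → Tm1
  | 0, t => t
  | n + 1, t => .lam (absN n t)

/-- Iterated application. -/
def mkApps : Tm1 → List Tm1 → Tm1 := List.foldl .app

/-- The translation of terms of λ(→,∧,∨,⊥) into λ→. -/
def trTm : Tm → Tm1
  | .var n => .var n
  | .lam _ t => .lam (trTm t)
  | .app s t => .app (trTm s) (trTm t)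
  | .pair s t => .lam (.app (.app (.var 0) ((trTm s).shift 0 1)) ((trTm t).shift 0 1))
  | .inl _ _ t => .lam (.lam (.app (.var 1) ((trTm t).shift 0 2)))
  | .inr _ _ t => .lam (.lam (.app (.var 0) ((trTm t).shift 0 2)))
  | .proj1 p σ _ =>
      let n := (args (trTy σ)).length
      absN n (.app ((trTm p).shift 0 n)
        (.lam (.lam (mkApps (.var 1) ((List.range n).map fun i => .var (n + 1 - i))))))
  | .proj2 p _ τ =>
      let m := (args (trTy τ)).length
      absN m (.app ((trTm p).shift 0 m)
        (.lam (.lam (mkApps (.var 0) ((List.range m).map fun i => .var (m + 1 - i))))))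
  | .case w _ _ s t δ =>
      let k := (args (trTy δ)).length
      absN k (.app (.app ((trTm w).shift 0 k)
          (.lam (mkApps ((trTm s).shift 1 k) ((List.range k).map fun i => .var (k - i)))))
        (.lam (mkApps ((trTm t).shift 1 k) ((List.range k).map fun i => .var (k - i)))))
  | .eps a σ =>
      let n := (args (trTy σ)).length
      absN (n - 1) ((trTm a).shift 0 (n - 1))

namespace Tm1

theorem shift_zero (t : Tm1) : ∀ c, shift c 0 t = t := by
  induction t with
  | var n => intro c; simp [shift]
  | lam t ih => intro c; simp [shift, ih]
  | app a b iha ihb => intro c; simp [shift, iha, ihb]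

theorem shift_shift (t : Tm1) : ∀ c c' d e, c ≤ c' → c' ≤ c + e →
    shift c' d (shift c e t) = shift c (e + d) t := by
  induction t with
  | var n =>
    intro c c' d e h1 h2
    simp only [shift]
    rcases lt_or_ge n c with h | h
    · rw [if_pos h]; simp only [shift]
      rw [if_pos (lt_of_lt_of_le h h1), if_pos h]
    · rw [if_neg (by omega)]; simp only [shift]
      rw [if_neg (by omega), if_neg (by omega)]
      congr 1; omega
  | lam t ih =>
    intro c c' d e h1 h2
    simp only [shift]
    rw [ih (c + 1) (c' + 1) d e (by omega) (by omega)]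
  | app a b iha ihb =>
    intro c c' d e h1 h2
    simp only [shift]
    rw [iha _ _ _ _ h1 h2, ihb _ _ _ _ h1 h2]

theorem subst_shift (t : Tm1) : ∀ c d s, (shift c (d + 1) t).subst c s = shift c d t := by
  induction t with
  | var n =>
    intro c d s
    simp only [shift]
    rcases lt_or_ge n c with h | h
    · rw [if_pos h, if_pos h]
      simp only [subst]
      rw [if_neg (by omega), if_neg (by omega)]
    · rw [if_neg (by omega), if_neg (by omega)]
      simp only [subst]
      rw [if_neg (by omega), if_pos (by omega)]
      congr 1
  | lam t ih =>
    intro c d s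
    simp only [shift, subst]
    rw [ih]
  | app a b iha ihb =>
    intro c d s
    simp only [shift, subst]
    rw [iha, ihb]

end Tm1

theorem mkApps_cons (f x : Tm1) (l : List Tm1) :
    mkApps f (x :: l) = mkApps (.app f x) l := rfl

theorem mkApps_append (f x : Tm1) (l : List Tm1) :
    mkApps f (l ++ [x]) = .app (mkApps f l) x := by
  simp [mkApps]

theorem shift_mkApps (c d : ℕ) (f : Tm1) (l : List Tm1) :
    (mkApps f l).shift c d = mkApps (f.shift c d) (l.map (Tm1.shift c d)) := by
  induction l generalizing f with
  | nil => rfl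
  | cons x l ih => simp only [mkApps_cons, List.map_cons, ih]; rfl

theorem subst_mkApps (n : ℕ) (s f : Tm1) (l : List Tm1) :
    (mkApps f l).subst n s = mkApps (f.subst n s) (l.map (Tm1.subst · n s)) := by
  induction l generalizing f with
  | nil => rfl
  | cons x l ih => simp only [mkApps_cons, List.map_cons, ih]; rfl

theorem absN_succ' (n : ℕ) (t : Tm1) : absN (n + 1) t = absN n (.lam t) := by
  induction n generalizing t with
  | zero => rfl
  | succ n ih => show Tm1.lam (absN (n + 1) t) = _; rw [ih]; rfl

theorem step1_absN {a b : Tm1} (n : ℕ) (h : Step1 a b) :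
    Step1 (absN n a) (absN n b) := by
  induction n with
  | zero => exact h
  | succ n ih => exact Step1.lam ih

theorem etaN (n : ℕ) (t : Tm1) :
    Relation.ReflTransGen Step1
      (absN n (mkApps (t.shift 0 n) ((List.range n).map fun i => .var (n - 1 - i)))) t := by
  induction n with
  | zero =>
    simp only [absN, List.range_zero, List.map_nil, mkApps, List.foldl_nil, Tm1.shift_zero]
    exact Relation.ReflTransGen.refl
  | succ n ih =>
    have hl : (List.range (n + 1)).map (fun i => Tm1.var (n + 1 - 1 - i)) =
        ((List.range n).map fun i => Tm1.var (n - 1 - i)).map (Tm1.shift 0 1) ++ [.var 0] := by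
      rw [List.range_succ, List.map_append, List.map_map]
      congr 1
      · apply List.map_congr_left
        intro i hi
        rw [List.mem_range] at hi
        simp only [Function.comp, Tm1.shift]
        rw [if_neg (by omega)]
        congr 1; omega
      · simp
    have hs : Tm1.shift 0 (n + 1) t = (t.shift 0 n).shift 0 1 := by
      rw [Tm1.shift_shift t 0 0 1 n (le_refl 0) (by omega)]
    rw [hl, mkApps_append, hs, ← shift_mkApps, absN_succ' n]
    exact Relation.ReflTransGen.head (step1_absN n Step1.eta) ih

/-- Under the translation, the β-redex `⟨M,N⟩π₁` of type `σ` βη-reduces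
(in one or more steps) to `⌈M⌉`. -/
theorem trTm_pair_proj1 {Γ : List Ty} {M N : Tm} {σ τ : Ty}
    (hM : HasTy Γ M σ) (hN : HasTy Γ N τ) :
    Relation.TransGen Step1 (trTm (.proj1 (.pair M N) σ τ)) (trTm M) := by
  set n := (args (trTy σ)).length with hn
  set M₁ := trTm M
  set N₁ := trTm N
  set K : Tm1 := .lam (.lam (mkApps (.var 1) ((List.range n).map fun i => .var (n + 1 - i))))
    with hK
  -- the translated term
  have h0 : trTm (.proj1 (.pair M N) σ τ) =
      absN n (.app (.lam (.app (.app (.var 0) (M₁.shift 0 (n + 1))) (N₁.shift 0 (n + 1)))) K) := by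
    simp only [trTm, ← hn, ← hK, Tm1.shift]
    rw [Tm1.shift_shift M₁ 0 1 n 1 (by omega) (by omega),
        Tm1.shift_shift N₁ 0 1 n 1 (by omega) (by omega)]
    norm_num [Nat.add_comm]
  -- step 1 : β at the head of the body
  have e1 : (Tm1.app (.app (.var 0) (M₁.shift 0 (n + 1))) (N₁.shift 0 (n + 1))).subst 0 K =
      .app (.app K (M₁.shift 0 n)) (N₁.shift 0 n) := by
    simp [Tm1.subst, Tm1.subst_shift]
  have s1 : Step1 (trTm (.proj1 (.pair M N) σ τ))
      (absN n (.app (.app K (M₁.shift 0 n)) (N₁.shift 0 n))) := by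
    rw [h0, ← e1]; exact step1_absN n Step1.beta
  -- step 2 : β for the first pairing argument
  have e2 : (Tm1.lam (mkApps (.var 1) ((List.range n).map fun i => .var (n + 1 - i)))).subst 0
        (M₁.shift 0 n) =
      .lam (mkApps (M₁.shift 0 (n + 1)) ((List.range n).map fun i => .var (n - i))) := by
    have hl2 : ∀ s : Tm1, ((List.range n).map fun i => Tm1.var (n + 1 - i)).map
        (Tm1.subst · 1 s) = (List.range n).map fun i => Tm1.var (n - i) := by
      intro s
      rw [List.map_map]
      apply List.map_congr_left
      intro i hi
      rw [List.mem_range] at hi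
      simp only [Function.comp, Tm1.subst]
      rw [if_neg (by omega), if_pos (by omega)]
      congr 1; omega
    simp only [Tm1.subst, subst_mkApps, hl2]
    rw [Tm1.shift_shift M₁ 0 0 1 n (le_refl 0) (by omega)]
    norm_num
  have s2 : Step1 (absN n (.app (.app K (M₁.shift 0 n)) (N₁.shift 0 n)))
      (absN n (.app (.lam (mkApps (M₁.shift 0 (n + 1))
        ((List.range n).map fun i => .var (n - i)))) (N₁.shift 0 n))) := by
    rw [← e2]; exact step1_absN n (Step1.appL Step1.beta)
  -- step 3 : β discarding the second component
  have e3 : (mkApps (M₁.shift 0 (n + 1)) ((List.range n).map fun i => Tm1.var (n - i))).subst 0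
        (N₁.shift 0 n) =
      mkApps (M₁.shift 0 n) ((List.range n).map fun i => .var (n - 1 - i)) := by
    have hl3 : ∀ s : Tm1, ((List.range n).map fun i => Tm1.var (n - i)).map
        (Tm1.subst · 0 s) = (List.range n).map fun i => Tm1.var (n - 1 - i) := by
      intro s
      rw [List.map_map]
      apply List.map_congr_left
      intro i hi
      rw [List.mem_range] at hi
      simp only [Function.comp, Tm1.subst]
      rw [if_neg (by omega), if_pos (by omega)]
      congr 1; omega
    rw [subst_mkApps, Tm1.subst_shift, hl3]
  have s3 : Step1 (absN n (.app (.lam (mkApps (M₁.shift 0 (n + 1))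
        ((List.range n).map fun i => .var (n - i)))) (N₁.shift 0 n)))
      (absN n (mkApps (M₁.shift 0 n) ((List.range n).map fun i => .var (n - 1 - i)))) := by
    rw [← e3]; exact step1_absN n Step1.beta
  exact Relation.TransGen.head s1 (Relation.TransGen.head' s2
    (Relation.ReflTransGen.head s3 (etaN n M₁)))
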